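/- Let X be uniformly distributed on 𝒳={1,…,K} (p(x)=1/K), let ρ:𝒳×𝒳→[0,∞) be a symmetric distortion measure in the following sense: there exist K distinct values ρ_1,…,ρ_K such that for every x the map x̂↦ρ(x,x̂) is a bijection from 𝒳 onto {ρ_1,…,ρ_K}, and for every x̂ the map x↦ρ(x,x̂) is a bijection from 𝒳 onto {ρ_1,…,ρ_K}. Let Q:(0,∞)→ℝ be convex with lim_{t→0+} t·Q(1/t)=0. Then for every D ≥ 0, R^Q(D) := inf{ I^Q(X;X̂) : conditional pmfs p(x̂|x) with Σ_{x,x̂} (1/K)p(x̂|x)ρ(x,x̂) ≤ D } equals inf{ Σ_{k:p_k>0} p_k·Q(1/(K·p_k)) : (p_1,…,p_K) a probability vector with Σ_k p_k·ρ_k ≤ D }. -/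

import Mathlib

open Filter

noncomputable def stmt8_phi (Q : ℝ → ℝ) (p q : ℝ) : ℝ :=
  if 0 < p then p * Q (q / p) else 0


lemma stmt8_anti (Q : ℝ → ℝ) (hQ : ConvexOn ℝ (Set.Ioi (0:ℝ)) Q)
    (hQlim : Filter.Tendsto (fun t : ℝ => t * Q (1 / t))
      (nhdsWithin 0 (Set.Ioi 0)) (nhds 0)) :
    ∀ a b : ℝ, 0 < a → a ≤ b → Q b ≤ Q a := by
  intro a b ha hab
  -- (1/s) * Q s → 0 as s → atTop
  have h1 : Tendsto (fun s : ℝ => 1 / s) atTop (nhdsWithin 0 (Set.Ioi 0)) := by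
    rw [tendsto_nhdsWithin_iff]
    constructor
    · simpa using tendsto_inv_atTop_zero
    · filter_upwards [eventually_gt_atTop (0:ℝ)] with s hs
      exact div_pos one_pos hs
  have h2 : Tendsto (fun s : ℝ => (1 / s) * Q s) atTop (nhds 0) := by
    have := hQlim.comp h1
    refine this.congr' ?_
    filter_upwards [eventually_gt_atTop (0:ℝ)] with s hs
    simp [Function.comp, one_div_one_div]
  -- s/(s-a) → 1
  have h3 : Tendsto (fun s : ℝ => 1 / (s - a)) atTop (nhds 0) := by
    have : Tendsto (fun s : ℝ => s - a) atTop atTop :=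
      tendsto_atTop_add_const_right _ (-a) tendsto_id
    exact this.inv_tendsto_atTop.congr (fun s => by simp [one_div])
  have h4 : Tendsto (fun s : ℝ => s / (s - a)) atTop (nhds 1) := by
    have : Tendsto (fun s : ℝ => 1 + a * (1 / (s - a))) atTop (nhds (1 + a * 0)) :=
      tendsto_const_nhds.add (tendsto_const_nhds.mul h3)
    rw [mul_zero, add_zero] at this
    refine this.congr' ?_
    filter_upwards [eventually_gt_atTop a] with s hs
    have hsa : s - a ≠ 0 := sub_ne_zero_of_ne (ne_of_gt hs)
    field_simp
    ring
  -- f s := Q a + ((b-a)/(s-a)) * (Q s - Q a) → Q a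
  have h5 : Tendsto (fun s : ℝ => Q a + ((b - a) / (s - a)) * (Q s - Q a))
      atTop (nhds (Q a)) := by
    have hA : Tendsto (fun s : ℝ => ((b - a) / (s - a)) * Q s) atTop (nhds 0) := by
      have : Tendsto (fun s : ℝ => (b - a) * ((s / (s - a)) * ((1/s) * Q s)))
          atTop (nhds ((b - a) * (1 * 0))) :=
        tendsto_const_nhds.mul (h4.mul h2)
      rw [one_mul, mul_zero] at this
      refine this.congr' ?_
      filter_upwards [eventually_gt_atTop a, eventually_gt_atTop (0:ℝ)] with s hs1 hs2
      have h0 : s ≠ 0 := ne_of_gt hs2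
      have hsa : s - a ≠ 0 := sub_ne_zero_of_ne (ne_of_gt hs1)
      field_simp
    have hB : Tendsto (fun s : ℝ => ((b - a) / (s - a)) * Q a) atTop (nhds 0) := by
      have : Tendsto (fun s : ℝ => ((b-a) * (1 / (s - a))) * Q a) atTop
          (nhds (((b-a) * 0) * Q a)) := (tendsto_const_nhds.mul h3).mul tendsto_const_nhds
      rw [mul_zero, zero_mul] at this
      refine this.congr ?_
      intro s; ring
    have hAB : Tendsto (fun s : ℝ => Q a + ((b - a) / (s - a) * Q s - (b - a) / (s - a) * Q a))
        atTop (nhds (Q a + (0 - 0))) := tendsto_const_nhds.add (hA.sub hB)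
    rw [sub_zero, add_zero] at hAB
    refine hAB.congr ?_
    intro s; ring
  -- Q b ≤ f s for s > b
  refine ge_of_tendsto h5 ?_
  filter_upwards [eventually_gt_atTop b] with s hs
  have hsa : a < s := lt_of_le_of_lt hab hs
  have hsa' : (0:ℝ) < s - a := by linarith
  have hlam : 0 ≤ (s - b) / (s - a) := div_nonneg (by linarith) hsa'.le
  have hμ : 0 ≤ (b - a) / (s - a) := div_nonneg (by linarith) hsa'.le
  have hsum : (s - b) / (s - a) + (b - a) / (s - a) = 1 := by
    field_simp
    ring
  have key := hQ.2 (Set.mem_Ioi.mpr ha) (Set.mem_Ioi.mpr (lt_trans ha hsa))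
    hlam hμ hsum
  have harg : (s - b) / (s - a) * a + (b - a) / (s - a) * s = b := by
    rw [div_mul_eq_mul_div, div_mul_eq_mul_div, ← add_div,
      div_eq_iff (ne_of_gt hsa')]
    ring
  simp only [smul_eq_mul] at key
  rw [harg] at key
  calc Q b ≤ (s - b) / (s - a) * Q a + (b - a) / (s - a) * Q s := key
    _ = Q a + (b - a) / (s - a) * (Q s - Q a) := by
        have : (s - b) / (s - a) = 1 - (b - a)/(s-a) := by rw [← hsum]; ring
        rw [this]; ring

lemma stmt8_jensen (K : ℕ) (hK : 0 < K) (Q : ℝ → ℝ)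
    (hQ : ConvexOn ℝ (Set.Ioi (0:ℝ)) Q)
    (hmono : ∀ a b : ℝ, 0 < a → a ≤ b → Q b ≤ Q a)
    (p q : Fin K → ℝ) (hp : ∀ i, 0 ≤ p i) (hq : ∀ i, 0 ≤ q i)
    (hpq : ∀ i, 0 < p i → 0 < q i) :
    stmt8_phi Q (∑ i, (1/(K:ℝ)) * p i) (∑ i, (1/(K:ℝ)) * q i)
      ≤ ∑ i, (1/(K:ℝ)) * stmt8_phi Q (p i) (q i) := by
  classical
  have hK' : (0:ℝ) < K := by exact_mod_cast hK
  have hw : (0:ℝ) < 1/(K:ℝ) := by positivity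
  set P := ∑ i, (1/(K:ℝ)) * p i with hP
  set Qs := ∑ i, (1/(K:ℝ)) * q i with hQs
  by_cases hP0 : 0 < P
  · set S := Finset.univ.filter (fun i : Fin K => 0 < p i) with hS
    -- P as sum over S
    have hPS : P = ∑ i ∈ S, (1/(K:ℝ)) * p i := by
      rw [hP, Finset.sum_filter]
      refine Finset.sum_congr rfl ?_
      intro i _
      split_ifs with h
      · rfl
      · have : p i = 0 := le_antisymm (not_lt.mp h) (hp i)
        rw [this, mul_zero]
    have hSne : S.Nonempty := by
      by_contra hcon
      rw [Finset.not_nonempty_iff_eq_empty] at hcon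
      rw [hPS, hcon, Finset.sum_empty] at hP0
      exact lt_irrefl _ hP0
    set QS := ∑ i ∈ S, (1/(K:ℝ)) * q i with hQS
    have hQSpos : 0 < QS := by
      refine Finset.sum_pos ?_ hSne
      intro i hi
      have hpi : 0 < p i := (Finset.mem_filter.mp hi).2
      exact mul_pos hw (hpq i hpi)
    have hQle : QS ≤ Qs := by
      refine Finset.sum_le_sum_of_subset_of_nonneg (Finset.filter_subset _ _) ?_
      intro i _ _
      exact mul_nonneg hw.le (hq i)
    -- Jensen on S
    have hsum1 : ∑ i ∈ S, (1/(K:ℝ)) * p i / P = 1 := by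
      rw [← Finset.sum_div, ← hPS, div_self (ne_of_gt hP0)]
    have hjensen := hQ.map_sum_le (t := S) (w := fun i => (1/(K:ℝ)) * p i / P)
      (p := fun i => q i / p i)
      (fun i _ => div_nonneg (mul_nonneg hw.le (hp i)) hP0.le)
      hsum1
      (fun i hi => by
        have hpi : 0 < p i := (Finset.mem_filter.mp hi).2
        exact Set.mem_Ioi.mpr (div_pos (hpq i hpi) hpi))
    have harg : ∑ i ∈ S, ((1/(K:ℝ)) * p i / P) • (q i / p i) = QS / P := by
      rw [hQS, Finset.sum_div]
      refine Finset.sum_congr rfl ?_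
      intro i hi
      have hpi : (p i) ≠ 0 := ne_of_gt (Finset.mem_filter.mp hi).2
      simp only [smul_eq_mul]
      field_simp
    rw [harg] at hjensen
    -- conclude
    have hphiP : stmt8_phi Q P Qs = P * Q (Qs / P) := if_pos hP0
    have hstep1 : Q (Qs / P) ≤ Q (QS / P) :=
      hmono _ _ (div_pos hQSpos hP0) (by gcongr)
    have hstep2 : P * Q (QS / P) ≤ ∑ i ∈ S, (1/(K:ℝ)) * (p i * Q (q i / p i)) := by
      have := mul_le_mul_of_nonneg_left hjensen hP0.le
      calc P * Q (QS / P) ≤ P * ∑ i ∈ S, ((1/(K:ℝ)) * p i / P) • Q (q i / p i) := this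
        _ = ∑ i ∈ S, (1/(K:ℝ)) * (p i * Q (q i / p i)) := by
            rw [Finset.mul_sum]
            refine Finset.sum_congr rfl ?_
            intro i hi
            simp only [smul_eq_mul]
            field_simp
    have hRHS : ∑ i, (1/(K:ℝ)) * stmt8_phi Q (p i) (q i)
        = ∑ i ∈ S, (1/(K:ℝ)) * (p i * Q (q i / p i)) := by
      rw [hS, Finset.sum_filter]
      refine Finset.sum_congr rfl ?_
      intro i _
      unfold stmt8_phi
      split_ifs with h
      · rfl
      · rw [mul_zero]
    rw [hphiP, hRHS]
    calc P * Q (Qs / P) ≤ P * Q (QS / P) := mul_le_mul_of_nonneg_left hstep1 hP0.le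
      _ ≤ _ := hstep2
  · -- P = 0 case
    have hPz : P = 0 := le_antisymm (not_lt.mp hP0)
      (Finset.sum_nonneg fun i _ => mul_nonneg hw.le (hp i))
    have hpz : ∀ i, p i = 0 := by
      intro i
      have := (Finset.sum_eq_zero_iff_of_nonneg
        (fun j _ => mul_nonneg hw.le (hp j))).mp hPz i (Finset.mem_univ i)
      have := mul_eq_zero.mp this
      rcases this with h | h
      · exact absurd h (ne_of_gt hw)
      · exact h
    have h1 : stmt8_phi Q P Qs = 0 := if_neg hP0
    have h2 : ∀ i, stmt8_phi Q (p i) (q i) = 0 := fun i =>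
      if_neg (by rw [hpz i]; exact lt_irrefl 0)
    rw [h1]
    rw [Finset.sum_congr rfl (fun i _ => by rw [h2 i, mul_zero])]
    rw [Finset.sum_const, smul_zero]

theorem stmt_8 (K : ℕ) (hK : 0 < K)
    (ρ : Fin K → Fin K → ℝ) (hρ : ∀ x xh, 0 ≤ ρ x xh)
    (ρv : Fin K → ℝ) (hρv : Function.Injective ρv)
    (hrow : ∀ x, ∃ e : Equiv.Perm (Fin K), ∀ xh, ρ x xh = ρv (e xh))
    (hcol : ∀ xh, ∃ e : Equiv.Perm (Fin K), ∀ x, ρ x xh = ρv (e x))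
    (Q : ℝ → ℝ) (hQ : ConvexOn ℝ (Set.Ioi (0:ℝ)) Q)
    (hQlim : Filter.Tendsto (fun t : ℝ => t * Q (1 / t))
      (nhdsWithin 0 (Set.Ioi 0)) (nhds 0))
    (D : ℝ) (hD : 0 ≤ D) :
    sInf { r : ℝ | ∃ pc : Fin K → Fin K → ℝ,
        (∀ x xh, 0 ≤ pc x xh) ∧ (∀ x, ∑ xh, pc x xh = 1) ∧
        (∑ x, ∑ xh, (1/(K:ℝ)) * pc x xh * ρ x xh ≤ D) ∧
        r = ∑ x, ∑ xh ∈ Finset.univ.filter (fun xh => 0 < pc x xh),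
            (1/(K:ℝ)) * pc x xh * Q ((∑ x', (1/(K:ℝ)) * pc x' xh) / pc x xh) }
      = sInf { r : ℝ | ∃ pv : Fin K → ℝ,
          (∀ k, 0 ≤ pv k) ∧ (∑ k, pv k = 1) ∧ (∑ k, pv k * ρv k ≤ D) ∧
          r = ∑ k ∈ Finset.univ.filter (fun k => 0 < pv k),
              pv k * Q (1/((K:ℝ) * pv k)) } := by
  have hmono : ∀ a b : ℝ, 0 < a → a ≤ b → Q b ≤ Q a := stmt8_anti Q hQ hQlim
  have hjen : ∀ (p q : Fin K → ℝ), (∀ i, 0 ≤ p i) → (∀ i, 0 ≤ q i) →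
      (∀ i, 0 < p i → 0 < q i) →
      stmt8_phi Q (∑ i, (1/(K:ℝ)) * p i) (∑ i, (1/(K:ℝ)) * q i)
        ≤ ∑ i, (1/(K:ℝ)) * stmt8_phi Q (p i) (q i) :=
    fun p q hp hq hpq => stmt8_jensen K hK Q hQ hmono p q hp hq hpq

  classical
  have hK' : (0:ℝ) < K := by exact_mod_cast hK
  have hw : (0:ℝ) < 1/(K:ℝ) := by positivity
  -- choose the row permutations
  choose e he using hrow
  have hcolkey : ∀ (xh x y : Fin K), e x xh = e y xh → x = y := by
    intro xh x y hxy
    obtain ⟨τ, hτ⟩ := hcol xh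
    have hx : e x xh = τ x := hρv (by rw [← he x xh, hτ x])
    have hy : e y xh = τ y := hρv (by rw [← he y xh, hτ y])
    exact τ.injective (by rw [← hx, ← hy, hxy])
  have hbij2 : ∀ xh, Function.Bijective (fun x => e x xh) := fun xh =>
    Finite.injective_iff_bijective.mp (fun x y h => hcolkey xh x y h)
  have hbij : ∀ k, Function.Bijective (fun x => (e x)⁻¹ k) := by
    intro k
    refine Finite.injective_iff_bijective.mp ?_
    intro x y hxy
    dsimp only at hxy
    apply hcolkey ((e x)⁻¹ k)
    have h2 : e y ((e x)⁻¹ k) = k := by rw [hxy]; exact (Equiv.Perm.eq_inv_iff_eq (f := e y) (y := k)).mp rfl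
    rw [(Equiv.Perm.eq_inv_iff_eq (f := e x) (y := k)).mp rfl, h2]
  -- rewrite the filtered sums via stmt8_phi
  have hval_pc : ∀ (pc : Fin K → Fin K → ℝ) (x : Fin K),
      (∑ xh ∈ Finset.univ.filter (fun xh => 0 < pc x xh),
        (1/(K:ℝ)) * pc x xh * Q ((∑ x', (1/(K:ℝ)) * pc x' xh) / pc x xh))
      = ∑ xh, (1/(K:ℝ)) * stmt8_phi Q (pc x xh) (∑ x', (1/(K:ℝ)) * pc x' xh) := by
    intro pc x
    rw [Finset.sum_filter]
    refine Finset.sum_congr rfl fun xh _ => ?_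
    unfold stmt8_phi
    split_ifs with h
    · ring
    · rw [mul_zero]
  have hval_pv : ∀ pv : Fin K → ℝ,
      (∑ k ∈ Finset.univ.filter (fun k => 0 < pv k), pv k * Q (1/((K:ℝ) * pv k)))
      = ∑ k, stmt8_phi Q (pv k) (1/(K:ℝ)) := by
    intro pv
    rw [Finset.sum_filter]
    refine Finset.sum_congr rfl fun k _ => ?_
    unfold stmt8_phi
    split_ifs with h
    · rw [← div_div]
    · rfl
  set A := { r : ℝ | ∃ pc : Fin K → Fin K → ℝ,
        (∀ x xh, 0 ≤ pc x xh) ∧ (∀ x, ∑ xh, pc x xh = 1) ∧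
        (∑ x, ∑ xh, (1/(K:ℝ)) * pc x xh * ρ x xh ≤ D) ∧
        r = ∑ x, ∑ xh ∈ Finset.univ.filter (fun xh => 0 < pc x xh),
            (1/(K:ℝ)) * pc x xh * Q ((∑ x', (1/(K:ℝ)) * pc x' xh) / pc x xh) } with hA
  set B := { r : ℝ | ∃ pv : Fin K → ℝ,
          (∀ k, 0 ≤ pv k) ∧ (∑ k, pv k = 1) ∧ (∑ k, pv k * ρv k ≤ D) ∧
          r = ∑ k ∈ Finset.univ.filter (fun k => 0 < pv k),
              pv k * Q (1/((K:ℝ) * pv k)) } with hB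
  -- B ⊆ A (as values)
  have hBA : ∀ r ∈ B, r ∈ A := by
    intro r hr
    obtain ⟨pv, hpv0, hpv1, hpvD, hpvr⟩ := hr
    have hmarg : ∀ xh, (∑ x', (1/(K:ℝ)) * pv (e x' xh)) = 1/(K:ℝ) := by
      intro xh
      rw [← Finset.mul_sum, Function.Bijective.sum_comp (hbij2 xh) pv, hpv1, mul_one]
    refine ⟨fun x xh => pv (e x xh), fun x xh => hpv0 _,
      fun x => (Equiv.sum_comp (e x) pv).trans hpv1, ?_, ?_⟩
    · calc ∑ x, ∑ xh, (1/(K:ℝ)) * pv (e x xh) * ρ x xh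
          = ∑ x : Fin K, (1/(K:ℝ)) * ∑ k, pv k * ρv k := by
            refine Finset.sum_congr rfl fun x _ => ?_
            rw [Finset.mul_sum, ← Equiv.sum_comp (e x) (fun k => (1/(K:ℝ)) * (pv k * ρv k))]
            refine Finset.sum_congr rfl fun xh _ => ?_
            rw [he x xh]; ring
        _ = ∑ k, pv k * ρv k := by
            rw [Finset.sum_const, Finset.card_univ, Fintype.card_fin, nsmul_eq_mul]
            field_simp
        _ ≤ D := hpvD
    · rw [hpvr, hval_pv pv]
      show (∑ k, stmt8_phi Q (pv k) (1/(K:ℝ)))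
          = ∑ x, ∑ xh ∈ Finset.univ.filter (fun xh => 0 < pv (e x xh)),
            (1/(K:ℝ)) * pv (e x xh) * Q ((∑ x', (1/(K:ℝ)) * pv (e x' xh)) / pv (e x xh))
      symm
      calc ∑ x, ∑ xh ∈ Finset.univ.filter (fun xh => 0 < pv (e x xh)),
            (1/(K:ℝ)) * pv (e x xh) * Q ((∑ x', (1/(K:ℝ)) * pv (e x' xh)) / pv (e x xh))
          = ∑ x : Fin K, ∑ xh, (1/(K:ℝ)) * stmt8_phi Q (pv (e x xh)) (1/(K:ℝ)) := by
            refine Finset.sum_congr rfl fun x _ => ?_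
            rw [hval_pc (fun x xh => pv (e x xh)) x]
            refine Finset.sum_congr rfl fun xh _ => ?_
            rw [hmarg xh]
        _ = ∑ x : Fin K, (1/(K:ℝ)) * ∑ k, stmt8_phi Q (pv k) (1/(K:ℝ)) := by
            refine Finset.sum_congr rfl fun x _ => ?_
            rw [Finset.mul_sum, Equiv.sum_comp (e x)
              (fun k => (1/(K:ℝ)) * stmt8_phi Q (pv k) (1/(K:ℝ)))]
        _ = ∑ k, stmt8_phi Q (pv k) (1/(K:ℝ)) := by
            rw [Finset.sum_const, Finset.card_univ, Fintype.card_fin, nsmul_eq_mul]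
            field_simp
  -- A maps into B with smaller value
  have hAB : ∀ r ∈ A, ∃ r' ∈ B, r' ≤ r := by
    intro r hr
    obtain ⟨pc, hpc0, hpc1, hpcD, hpcr⟩ := hr
    set q := fun xh => ∑ x', (1/(K:ℝ)) * pc x' xh with hq
    have hq0 : ∀ xh, 0 ≤ q xh :=
      fun xh => Finset.sum_nonneg fun x _ => mul_nonneg hw.le (hpc0 x xh)
    have hqpos : ∀ x xh, 0 < pc x xh → 0 < q xh := by
      intro x xh hx
      have h1 : (1/(K:ℝ)) * pc x xh ≤ q xh :=
        Finset.single_le_sum (f := fun x' => (1/(K:ℝ)) * pc x' xh)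
          (fun x' _ => mul_nonneg hw.le (hpc0 x' xh)) (Finset.mem_univ x)
      exact lt_of_lt_of_le (mul_pos hw hx) h1
    set pv := fun k => ∑ x, (1/(K:ℝ)) * pc x ((e x)⁻¹ k) with hpv
    have hpv0 : ∀ k, 0 ≤ pv k :=
      fun k => Finset.sum_nonneg fun x _ => mul_nonneg hw.le (hpc0 _ _)
    have hpv1 : ∑ k, pv k = 1 := by
      rw [hpv, Finset.sum_comm]
      calc ∑ x : Fin K, ∑ k, (1/(K:ℝ)) * pc x ((e x)⁻¹ k)
          = ∑ x : Fin K, (1/(K:ℝ)) := by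
            refine Finset.sum_congr rfl fun x _ => ?_
            rw [← Finset.mul_sum, Equiv.sum_comp ((e x)⁻¹) (pc x), hpc1 x, mul_one]
        _ = 1 := by
            rw [Finset.sum_const, Finset.card_univ, Fintype.card_fin, nsmul_eq_mul]
            field_simp
    have hpvD : ∑ k, pv k * ρv k ≤ D := by
      calc ∑ k, pv k * ρv k
          = ∑ x, ∑ xh, (1/(K:ℝ)) * pc x xh * ρ x xh := by
            rw [hpv]
            simp only [Finset.sum_mul]
            rw [Finset.sum_comm]
            refine Finset.sum_congr rfl fun x _ => ?_
            rw [← Equiv.sum_comp ((e x)⁻¹)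
              (fun xh => (1/(K:ℝ)) * pc x xh * ρ x xh)]
            refine Finset.sum_congr rfl fun k _ => ?_
            rw [he x ((e x)⁻¹ k), (Equiv.Perm.eq_inv_iff_eq (f := e x) (y := k)).mp rfl]
        _ ≤ D := hpcD
    have hqk : ∀ k, ∑ x, (1/(K:ℝ)) * q ((e x)⁻¹ k) = 1/(K:ℝ) := by
      intro k
      rw [← Finset.mul_sum]
      have : ∑ x, q ((e x)⁻¹ k) = 1 := by
        rw [hq]
        rw [Finset.sum_comm]
        calc ∑ x' : Fin K, ∑ x, (1/(K:ℝ)) * pc x' ((e x)⁻¹ k)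
            = ∑ x' : Fin K, (1/(K:ℝ)) := by
              refine Finset.sum_congr rfl fun x' _ => ?_
              rw [← Finset.mul_sum, Function.Bijective.sum_comp (hbij k) (pc x'), hpc1 x', mul_one]
          _ = 1 := by
              rw [Finset.sum_const, Finset.card_univ, Fintype.card_fin, nsmul_eq_mul]
              field_simp
      rw [this, mul_one]
    refine ⟨∑ k, stmt8_phi Q (pv k) (1/(K:ℝ)), ⟨pv, hpv0, hpv1, hpvD, (hval_pv pv).symm⟩, ?_⟩
    rw [hpcr]
    calc ∑ k, stmt8_phi Q (pv k) (1/(K:ℝ))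
        ≤ ∑ k, ∑ x, (1/(K:ℝ)) * stmt8_phi Q (pc x ((e x)⁻¹ k)) (q ((e x)⁻¹ k)) := by
          refine Finset.sum_le_sum fun k _ => ?_
          have := hjen (fun x => pc x ((e x)⁻¹ k)) (fun x => q ((e x)⁻¹ k))
            (fun x => hpc0 _ _) (fun x => hq0 _) (fun x hx => hqpos _ _ hx)
          rwa [hqk k] at this
      _ = ∑ x, ∑ xh, (1/(K:ℝ)) * stmt8_phi Q (pc x xh) (q xh) := by
          rw [Finset.sum_comm]
          refine Finset.sum_congr rfl fun x _ => ?_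
          exact Equiv.sum_comp ((e x)⁻¹) (fun xh => (1/(K:ℝ)) * stmt8_phi Q (pc x xh) (q xh))
      _ = ∑ x, ∑ xh ∈ Finset.univ.filter (fun xh => 0 < pc x xh),
            (1/(K:ℝ)) * pc x xh * Q ((∑ x', (1/(K:ℝ)) * pc x' xh) / pc x xh) := by
          refine Finset.sum_congr rfl fun x _ => (hval_pc pc x).symm
  -- lower bound on B
  have hBbd : ∀ r ∈ B, Q 1 ≤ r := by
    intro r hr
    obtain ⟨pv, hpv0, hpv1, hpvD, hpvr⟩ := hr
    have hjen1 := hjen pv (fun _ => 1/(K:ℝ)) hpv0 (fun _ => hw.le) (fun _ _ => hw)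
    have h1 : ∑ i, (1/(K:ℝ)) * pv i = 1/(K:ℝ) := by
      rw [← Finset.mul_sum, hpv1, mul_one]
    have h2 : ∑ _i : Fin K, (1/(K:ℝ)) * (1/(K:ℝ)) = 1/(K:ℝ) := by
      rw [Finset.sum_const, Finset.card_univ, Fintype.card_fin, nsmul_eq_mul]
      field_simp
    rw [h1, h2] at hjen1
    have h3 : stmt8_phi Q (1/(K:ℝ)) (1/(K:ℝ)) = (1/(K:ℝ)) * Q 1 := by
      unfold stmt8_phi
      rw [if_pos hw, div_self (ne_of_gt hw)]
    rw [h3, ← Finset.mul_sum] at hjen1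
    have := le_of_mul_le_mul_left (by linarith [hjen1] : (1/(K:ℝ)) * Q 1 ≤ (1/(K:ℝ)) * ∑ i, stmt8_phi Q (pv i) (1/(K:ℝ))) hw
    rw [hpvr, hval_pv pv]
    exact this
  have hAbd : ∀ r ∈ A, Q 1 ≤ r := by
    intro r hr
    obtain ⟨r', hr', hle⟩ := hAB r hr
    exact le_trans (hBbd r' hr') hle
  rcases Set.eq_empty_or_nonempty B with hBe | hBne
  · have hAe : A = ∅ := by
      rw [Set.eq_empty_iff_forall_notMem]
      intro r hr
      obtain ⟨r', hr', _⟩ := hAB r hr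
      rw [hBe] at hr'
      exact hr'
    rw [hAe, hBe]
  · apply le_antisymm
    · exact le_csInf hBne fun r hr => csInf_le ⟨Q 1, fun x hx => hAbd x hx⟩ (hBA r hr)
    · obtain ⟨r0, hr0⟩ := hBne
      refine le_csInf ⟨r0, hBA r0 hr0⟩ fun r hr => ?_
      obtain ⟨r', hr', hle⟩ := hAB r hr
      exact le_trans (csInf_le ⟨Q 1, fun x hx => hBbd x hx⟩ hr') hle
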